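/- Let G be a graph, C a longest cycle of G with a fixed orientation, H a component of G − C, and v1, v2 distinct vertices on C each with a neighbor in H. If v1⁻ is adjacent to a vertex w on the oriented segment of C from v1 to v2⁻, then v2⁺ is not adjacent to w⁺. -/

import Mathlib

open SimpleGraph

variable {V : Type*} [Fintype V] [DecidableEq V]

/-- `p 0, p 1, ..., p (n-1)` is a path of order `n` in `G`. -/
def IsPathOn (G : SimpleGraph V) (n : ℕ) (p : ℕ → V) : Prop :=
  (∀ i j, i < n → j < n → p i = p j → i = j) ∧
  (∀ i, i + 1 < n → G.Adj (p i) (p (i + 1)))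

/-- An induced path of order `n` in `G`. -/
def IsInducedPathOn (G : SimpleGraph V) (n : ℕ) (p : ℕ → V) : Prop :=
  IsPathOn G n p ∧ ∀ i j, i < n → j < n → G.Adj (p i) (p j) → (i + 1 = j ∨ j + 1 = i)

/-- `G` contains no induced path on 5 vertices. -/
def P5Free (G : SimpleGraph V) : Prop := ¬ ∃ p : ℕ → V, IsInducedPathOn G 5 p

/-- `G` contains no induced `K₄` minus an edge. -/
def K4mFree (G : SimpleGraph V) : Prop :=
  ¬ ∃ a b c d : V, a ≠ b ∧ a ≠ c ∧ a ≠ d ∧ b ≠ c ∧ b ≠ d ∧ c ≠ d ∧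
    G.Adj a b ∧ G.Adj a c ∧ G.Adj a d ∧ G.Adj b c ∧ G.Adj b d ∧ ¬ G.Adj c d

/-- `G` contains no induced `W*` (two triangles `abc`, `def` joined by the edge `cd`). -/
def WStarFree (G : SimpleGraph V) : Prop :=
  ¬ ∃ a b c d e f : V, List.Nodup [a, b, c, d, e, f] ∧
    G.Adj a b ∧ G.Adj b c ∧ G.Adj a c ∧ G.Adj d e ∧ G.Adj e f ∧ G.Adj d f ∧ G.Adj c d ∧
    ¬ G.Adj a d ∧ ¬ G.Adj a e ∧ ¬ G.Adj a f ∧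
    ¬ G.Adj b d ∧ ¬ G.Adj b e ∧ ¬ G.Adj b f ∧ ¬ G.Adj c e ∧ ¬ G.Adj c f

/-- `G` contains no induced paw (triangle `abc` with pendant edge `cd`). -/
def Z1Free (G : SimpleGraph V) : Prop :=
  ¬ ∃ a b c d : V, List.Nodup [a, b, c, d] ∧
    G.Adj a b ∧ G.Adj b c ∧ G.Adj a c ∧ G.Adj c d ∧ ¬ G.Adj a d ∧ ¬ G.Adj b d

/-- An (oriented) cycle of length `n` in `G`, as an injective map `ZMod n → V`
with consecutive vertices adjacent. -/
def IsCycleOn (G : SimpleGraph V) (n : ℕ) (c : ZMod n → V) : Prop :=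
  3 ≤ n ∧ Function.Injective c ∧ ∀ i, G.Adj (c i) (c (i + 1))

/-- A longest cycle of `G`. -/
def IsLongestCycle (G : SimpleGraph V) (n : ℕ) (c : ZMod n → V) : Prop :=
  IsCycleOn G n c ∧ ∀ (m : ℕ) (d : ZMod m → V), IsCycleOn G m d → m ≤ n

/-- A dominating cycle: every edge of `G` is incident with a vertex of the cycle. -/
def DominatingCycle (G : SimpleGraph V) (n : ℕ) (c : ZMod n → V) : Prop :=
  IsCycleOn G n c ∧ ∀ u v : V, G.Adj u v → u ∈ Set.range c ∨ v ∈ Set.range c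

/-- `H` is (the vertex set of) a connected component of `G - R`. -/
def IsCompOff (G : SimpleGraph V) (R : Set V) (H : Set V) : Prop :=
  H.Nonempty ∧ Disjoint H R ∧ (G.induce H).Connected ∧
  ∀ u v : V, u ∈ H → v ∉ H → v ∉ R → ¬ G.Adj u v

/-- `μ`: the maximum order of a component of `G - R`. -/
noncomputable def muC (G : SimpleGraph V) (R : Set V) : ℕ :=
  sSup {k | ∃ H : Set V, IsCompOff G R H ∧ H.ncard = k}

/-- `ω`: the number of components of `G - R` of maximum order. -/
noncomputable def omegaC (G : SimpleGraph V) (R : Set V) : ℕ :=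
  {H : Set V | IsCompOff G R H ∧ H.ncard = muC G R}.ncard

/-- `G` is 2-connected: at least 3 vertices, connected, and removing any
vertex leaves it connected. -/
def TwoConnected (G : SimpleGraph V) : Prop :=
  3 ≤ Fintype.card V ∧ G.Connected ∧
  ∀ v : V, (G.induce ({v}ᶜ : Set V)).Connected

/-- The set of indices of `ZMod n` encountered going from `s` to `t` in the
positive direction (including both `s` and `t`). -/
def seg (n : ℕ) (s t : ZMod n) : Set (ZMod n) :=
  {x | ∃ k : ℕ, x = s + (k : ZMod n) ∧ ∀ m : ℕ, m < k → s + (m : ZMod n) ≠ t}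

/-- `G` is complete multipartite: the vertices partition into classes of an
equivalence relation which are independent, with all edges between classes. -/
def CompleteMultipartite (G : SimpleGraph V) : Prop :=
  ∃ r : V → V → Prop, Equivalence r ∧ ∀ u v : V, u ≠ v → (G.Adj u v ↔ ¬ r u v)

/-- A `C`-path (for `R = V(C)`): a path of order at least 2 whose ends lie in
`R` and whose internal vertices avoid `R`. -/
def IsCPath (G : SimpleGraph V) (R : Set V) (m : ℕ) (p : ℕ → V) : Prop :=
  2 ≤ m ∧ IsPathOn G m p ∧ p 0 ∈ R ∧ p (m - 1) ∈ R ∧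
  ∀ i, 0 < i → i < m - 1 → p i ∉ R


lemma chain'_map_range {α : Type*} (R : α → α → Prop) (g : ℕ → α) (len : ℕ)
    (h : ∀ m, m + 1 < len → R (g m) (g (m + 1))) :
    List.Chain' R ((List.range len).map g) := by
  unfold List.Chain'
  rw [List.isChain_iff_getElem]
  intro i hi
  simp only [List.length_map, List.length_range] at hi
  simp only [List.getElem_map, List.getElem_range]
  exact h i (by omega)

lemma head?_map_range {α : Type*} (g : ℕ → α) (l : ℕ) :
    ((List.range (l + 1)).map g).head? = some (g 0) := by
  rw [List.range_succ_eq_map]; simp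

lemma getLast?_map_range {α : Type*} (g : ℕ → α) (l : ℕ) :
    ((List.range (l + 1)).map g).getLast? = some (g l) := by
  rw [List.range_succ, List.map_append]
  simp [List.getLast?_concat]

lemma option_some_or {α : Type*} (a : α) (o : Option α) : (some a).or o = some a := rfl

lemma length_le_of_cycle_list (G : SimpleGraph V) (n : ℕ) (c : ZMod n → V)
    (hc : IsLongestCycle G n c) (L : List V) (h3 : 3 ≤ L.length)
    (hnd : L.Nodup) (hch : L.Chain' G.Adj)
    (hne : L ≠ [])
    (hlast : G.Adj (L.getLast hne) (L.head hne)) :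
    L.length ≤ n := by
  haveI : NeZero L.length := ⟨by omega⟩
  haveI : Fact (1 < L.length) := ⟨by omega⟩
  have main : ∀ (a b : ℕ) (ha : a < L.length) (hb : b < L.length),
      b = (a + 1) % L.length → G.Adj (L.get ⟨a, ha⟩) (L.get ⟨b, hb⟩) := by
    intro a b ha hb hb'
    by_cases h : a + 1 < L.length
    · have hba : b = a + 1 := by rw [hb', Nat.mod_eq_of_lt h]
      subst hba
      exact List.isChain_iff_getElem.mp hch a (by omega)
    · have ha' : a = L.length - 1 := by omega
      have hlen : a + 1 = L.length := by omega
      have hb0 : b = 0 := by rw [hb', hlen, Nat.mod_self]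
      subst ha' hb0
      obtain ⟨x, tl, rfl⟩ := List.exists_cons_of_ne_nil hne
      have h1 : (x :: tl).get ⟨(x :: tl).length - 1, by omega⟩ = (x :: tl).getLast hne :=
        (List.getLast_eq_getElem hne).symm
      rw [h1]
      exact hlast
  refine hc.2 L.length (fun i => L.get ⟨i.val, ZMod.val_lt i⟩) ⟨h3, ?_, ?_⟩
  · intro a b hab
    have h := List.nodup_iff_injective_get.mp hnd hab
    exact ZMod.val_injective _ (congrArg Fin.val h)
  · intro i
    exact main i.val (i + 1).val (ZMod.val_lt i) (ZMod.val_lt _)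
      (by rw [ZMod.val_add, ZMod.val_one])


theorem stmt_4 (G : SimpleGraph V) (n : ℕ) (c : ZMod n → V)
    (hc : IsLongestCycle G n c)
    (H : Set V) (hH : IsCompOff G (Set.range c) H)
    (i1 i2 : ZMod n) (hne : c i1 ≠ c i2)
    (h1 : ∃ x ∈ H, G.Adj (c i1) x) (h2 : ∃ x ∈ H, G.Adj (c i2) x) :
    ∀ j ∈ seg n i1 (i2 - 1),
      G.Adj (c (i1 - 1)) (c j) → ¬ G.Adj (c (i2 + 1)) (c (j + 1)) := by
  intro j hj hw hW
  obtain ⟨⟨hn3, hcinj, hadj⟩, hmax⟩ := hc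
  haveI : NeZero n := ⟨by omega⟩
  obtain ⟨k, rfl, hk0⟩ := hj
  have hnei : i1 ≠ i2 := fun h => hne (by rw [h])
  set t := (i2 - i1).val with ht
  have htlt : t < n := ZMod.val_lt _
  have htpos : 1 ≤ t := by
    rcases Nat.eq_zero_or_pos t with h0 | h
    · exfalso
      apply hnei
      have h2' : i2 - i1 = 0 := (ZMod.val_eq_zero _).mp h0
      exact (sub_eq_zero.mp h2').symm
    · exact h
  have hti : i2 = i1 + (t : ZMod n) := by
    rw [ht, ZMod.natCast_val, ZMod.cast_id]; ring
  have hkt : k + 1 ≤ t := by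
    by_contra hcon
    refine hk0 (t - 1) (by omega) ?_
    rw [hti]
    push_cast [Nat.cast_sub htpos]
    ring
  -- the vertex function along the cycle, offset from i1
  set f : ℕ → V := fun o => c (i1 + (o : ZMod n)) with hf
  have hfdef : ∀ o : ℕ, f o = c (i1 + (o : ZMod n)) := fun o => rfl
  have hfinj : ∀ a b : ℕ, a < n → b < n → f a = f b → a = b := by
    intro a b ha hb hab
    have h' : i1 + (a : ZMod n) = i1 + (b : ZMod n) := hcinj hab
    have h2' : (a : ZMod n) = (b : ZMod n) := add_left_cancel h'
    have h3' := congrArg ZMod.val h2'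
    rwa [ZMod.val_cast_of_lt ha, ZMod.val_cast_of_lt hb] at h3'
  -- path through H
  obtain ⟨x1, hx1H, hx1⟩ := h1
  obtain ⟨x2, hx2H, hx2⟩ := h2
  obtain ⟨hHne, hdisj, hconn, hclosed⟩ := hH
  obtain ⟨wP⟩ := hconn.preconnected ⟨x1, hx1H⟩ ⟨x2, hx2H⟩
  set q := wP.toPath with hq
  set P : List V := q.1.support.map Subtype.val with hP
  have hPne : P ≠ [] := by
    rw [hP]
    intro h0
    exact q.1.support_ne_nil (List.map_eq_nil_iff.mp h0)
  have hPnd : P.Nodup := List.Nodup.map Subtype.val_injective q.2.support_nodup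
  have hPch : P.Chain' G.Adj := by
    unfold List.Chain'
    rw [hP, List.isChain_map]
    exact q.1.isChain_adj_support.imp (fun a b hab => hab)
  have hPhead : P.head? = some x1 := by
    rw [hP, List.head?_map, q.1.support_eq_cons]; rfl
  have hPlast : P.getLast? = some x2 := by
    rw [hP, List.getLast?_map, List.getLast?_eq_getLast q.1.support_ne_nil,
      q.1.getLast_support]
    rfl
  have hPH : ∀ x ∈ P, x ∈ H := by
    intro x hx
    rw [hP, List.mem_map] at hx
    obtain ⟨y, _, rfl⟩ := hx
    exact y.2
  -- offset blocks
  set N2 : List ℕ := (List.range (t - k)).map (fun m => t - m) with hN2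
  set N3 : List ℕ := (List.range (n - 1 - t)).map (fun m => t + 1 + m) with hN3
  set N4 : List ℕ := (List.range k).map (fun m => k - m) with hN4
  have hm2 : ∀ o ∈ N2, k + 1 ≤ o ∧ o ≤ t := by
    intro o ho
    rw [hN2, List.mem_map] at ho
    obtain ⟨m, hm, rfl⟩ := ho
    rw [List.mem_range] at hm
    omega
  have hm3 : ∀ o ∈ N3, t + 1 ≤ o ∧ o ≤ n - 1 := by
    intro o ho
    rw [hN3, List.mem_map] at ho
    obtain ⟨m, hm, rfl⟩ := ho
    rw [List.mem_range] at hm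
    omega
  have hm4 : ∀ o ∈ N4, 1 ≤ o ∧ o ≤ k := by
    intro o ho
    rw [hN4, List.mem_map] at ho
    obtain ⟨m, hm, rfl⟩ := ho
    rw [List.mem_range] at hm
    omega
  have hndNN : (N2 ++ N3 ++ N4).Nodup := by
    rw [List.nodup_append, List.nodup_append]
    refine ⟨⟨?_, ?_, ?_⟩, ?_, ?_⟩
    · refine List.Nodup.map_on ?_ List.nodup_range
      intro x hx y hy hxy
      rw [List.mem_range] at hx hy
      omega
    · refine List.Nodup.map_on ?_ List.nodup_range
      intro x hx y hy hxy
      rw [List.mem_range] at hx hy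
      omega
    · intro a ha b hb hab
      subst hab
      have h2' := hm2 a ha
      have h3' := hm3 a hb
      omega
    · refine List.Nodup.map_on ?_ List.nodup_range
      intro x hx y hy hxy
      rw [List.mem_range] at hx hy
      omega
    · intro a ha b hb hab
      subst hab
      rw [List.mem_append] at ha
      have h4' := hm4 a hb
      rcases ha with h | h
      · have := hm2 a h; omega
      · have := hm3 a h; omega
  have hmNN : ∀ o ∈ N2 ++ N3 ++ N4, 1 ≤ o ∧ o < n := by
    intro o ho
    rw [List.mem_append, List.mem_append] at ho
    rcases ho with (h | h) | h
    · have := hm2 o h; omega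
    · have := hm3 o h; omega
    · have := hm4 o h; omega
  -- the long list
  set L : List V := ([f 0] ++ P) ++ (N2.map f ++ (N3.map f ++ N4.map f)) with hL
  have hPlen : 1 ≤ P.length := List.length_pos_iff.mpr hPne
  have hLlen : L.length = n + P.length := by
    rw [hL, hN2, hN3, hN4]
    simp only [List.length_append, List.length_map, List.length_range,
      List.length_singleton]
    omega
  have hf0 : f 0 = c i1 := by rw [hfdef]; norm_num
  have hnotH : ∀ o : ℕ, f o ∉ H := by
    intro o ho
    exact Set.disjoint_left.mp hdisj ho ⟨_, (hfdef o).symm⟩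
  have hmapNN : N2.map f ++ (N3.map f ++ N4.map f) = (N2 ++ N3 ++ N4).map f := by
    simp [List.map_append]
  have hndL : L.Nodup := by
    rw [hL, List.nodup_append]
    refine ⟨?_, ?_, ?_⟩
    · rw [List.nodup_append]
      refine ⟨List.nodup_singleton _, hPnd, ?_⟩
      intro a ha b hb hab
      subst hab
      rw [List.mem_singleton] at ha
      subst ha
      exact hnotH 0 (hPH _ hb)
    · rw [hmapNN]
      exact List.Nodup.map_on
        (fun a ha b hb hab => hfinj a b (hmNN a ha).2 (hmNN b hb).2 hab) hndNN
    · intro a ha b hb hab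
      subst hab
      rw [hmapNN, List.mem_map] at hb
      obtain ⟨o, ho, rfl⟩ := hb
      rw [List.mem_append, List.mem_singleton] at ha
      rcases ha with h | h
      · have h5 := hfinj o 0 (hmNN o ho).2 (by omega) h
        have := hmNN o ho
        omega
      · exact hnotH o (hPH _ h)
  -- key f-identities
  have e1 : f t = c i2 := by rw [hfdef, hti]
  have e2 : f (k + 1) = c (i1 + (k : ZMod n) + 1) := by
    rw [hfdef]; congr 1; push_cast; ring
  have e3 : f (n - 1) = c (i1 - 1) := by
    rw [hfdef]
    congr 1
    push_cast [Nat.cast_sub (by omega : 1 ≤ n)]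
    rw [ZMod.natCast_self]
    ring
  have e4 : f k = c (i1 + (k : ZMod n)) := hfdef k
  have e5 : f 1 = c (i1 + 1) := by rw [hfdef]; congr 1; push_cast; ring
  have et1 : f (t + 1) = c (i2 + 1) := by
    rw [hfdef, hti]; congr 1; push_cast; ring
  -- junction adjacencies
  have jd : G.Adj (f (k + 1)) (f k) := by
    rw [e2, e4]
    exact (hadj (i1 + (k : ZMod n))).symm
  have je : G.Adj (f (n - 1)) (f k) := by rw [e3, e4]; exact hw
  have jf : G.Adj (f 1) (f 0) := by rw [e5, hf0]; exact (hadj i1).symm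
  have jg : G.Adj (f (n - 1)) (f 0) := by
    rw [e3, hf0]
    have := hadj (i1 - 1)
    rwa [sub_add_cancel] at this
  have jc : G.Adj (f (k + 1)) (f (t + 1)) := by rw [e2, et1]; exact hW.symm
  -- chain facts for the blocks
  have hch2 : (N2.map f).Chain' G.Adj := by
    rw [hN2, List.map_map]
    apply chain'_map_range
    intro m hm
    show G.Adj (f (t - m)) (f (t - (m + 1)))
    simp only [hfdef]
    have hsub : i1 + ((t - (m + 1) : ℕ) : ZMod n) + 1 = i1 + ((t - m : ℕ) : ZMod n) := by
      push_cast [Nat.cast_sub (by omega : m + 1 ≤ t), Nat.cast_sub (by omega : m ≤ t)]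
      ring
    have h6 := hadj (i1 + ((t - (m + 1) : ℕ) : ZMod n))
    rw [hsub] at h6
    exact h6.symm
  have hch3 : (N3.map f).Chain' G.Adj := by
    rw [hN3, List.map_map]
    apply chain'_map_range
    intro m hm
    show G.Adj (f (t + 1 + m)) (f (t + 1 + (m + 1)))
    simp only [hfdef]
    have hsub : i1 + ((t + 1 + (m + 1) : ℕ) : ZMod n) = i1 + ((t + 1 + m : ℕ) : ZMod n) + 1 := by
      push_cast
      ring
    rw [hsub]
    exact hadj _
  have hch4 : (N4.map f).Chain' G.Adj := by
    rw [hN4, List.map_map]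
    apply chain'_map_range
    intro m hm
    show G.Adj (f (k - m)) (f (k - (m + 1)))
    simp only [hfdef]
    have hsub : i1 + ((k - (m + 1) : ℕ) : ZMod n) + 1 = i1 + ((k - m : ℕ) : ZMod n) := by
      push_cast [Nat.cast_sub (by omega : m + 1 ≤ k), Nat.cast_sub (by omega : m ≤ k)]
      ring
    have h6 := hadj (i1 + ((k - (m + 1) : ℕ) : ZMod n))
    rw [hsub] at h6
    exact h6.symm
  -- head/last of block 2
  obtain ⟨l2, hl2⟩ : ∃ l, t - k = l + 1 := ⟨t - k - 1, by omega⟩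
  have hB2head : (N2.map f).head? = some (f t) := by
    rw [hN2, List.map_map, hl2, head?_map_range]
    simp [Function.comp]
  have hB2last : (N2.map f).getLast? = some (f (k + 1)) := by
    rw [hN2, List.map_map, hl2, getLast?_map_range]
    have hd : t - l2 = k + 1 := by omega
    simp [Function.comp, hd]
  -- chain of whole list
  have hchL : L.Chain' G.Adj := by
    rw [hL]
    simp only [List.Chain', List.isChain_append]
    refine ⟨⟨List.isChain_singleton _, hPch, ?_⟩, ⟨hch2, ⟨hch3, hch4, ?_⟩, ?_⟩, ?_⟩
    · -- f 0 to head of P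
      intro x hx y hy
      simp only [List.getLast?_singleton, Option.mem_some_iff] at hx
      rw [hPhead, Option.mem_some_iff] at hy
      subst hx; subst hy
      rw [hf0]
      exact hx1
    · -- last of N3 to head of N4
      intro x hx y hy
      rcases Nat.eq_zero_or_pos (n - 1 - t) with h3z | h3p
      · rw [hN3, h3z] at hx; simp at hx
      rcases Nat.eq_zero_or_pos k with h4z | h4p
      · rw [hN4, h4z] at hy; simp at hy
      obtain ⟨l3, hl3⟩ : ∃ l, n - 1 - t = l + 1 := ⟨n - 1 - t - 1, by omega⟩
      obtain ⟨l4, hl4⟩ : ∃ l, k = l + 1 := ⟨k - 1, by omega⟩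
      rw [hN3, List.map_map, hl3, getLast?_map_range, Option.mem_some_iff] at hx
      rw [hN4, List.map_map, hl4, head?_map_range, Option.mem_some_iff] at hy
      subst hx; subst hy
      have hx' : (f ∘ fun m => t + 1 + m) l3 = f (n - 1) := by
        simp only [Function.comp]
        congr 1
        omega
      have hy' : (f ∘ fun m => l4 + 1 - m) 0 = f k := by
        simp only [Function.comp]
        congr 1
        omega
      rw [hx', hy']
      exact je
    · -- last of N2 to head of N3 ++ N4
      intro x hx y hy
      rw [hB2last, Option.mem_some_iff] at hx
      subst hx
      rw [List.head?_append] at hy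
      rcases Nat.eq_zero_or_pos (n - 1 - t) with h3z | h3p
      · rw [hN3, h3z] at hy
        simp only [List.range_zero, List.map_nil, List.head?_nil, Option.none_or] at hy
        rcases Nat.eq_zero_or_pos k with h4z | h4p
        · rw [hN4, h4z] at hy; simp at hy
        obtain ⟨l4, hl4⟩ : ∃ l, k = l + 1 := ⟨k - 1, by omega⟩
        rw [hN4, List.map_map, hl4, head?_map_range, Option.mem_some_iff] at hy
        subst hy
        have hy' : (f ∘ fun m => l4 + 1 - m) 0 = f k := by
          simp only [Function.comp]
          congr 1
          omega
        rw [hy']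
        exact jd
      · obtain ⟨l3, hl3⟩ : ∃ l, n - 1 - t = l + 1 := ⟨n - 1 - t - 1, by omega⟩
        rw [hN3, List.map_map, hl3, head?_map_range] at hy
        simp only [option_some_or, Option.mem_some_iff] at hy
        subst hy
        have hy' : (f ∘ fun m => t + 1 + m) 0 = f (t + 1) := by
          simp only [Function.comp, Nat.add_zero]
        rw [hy']
        exact jc
    · -- last of [f 0] ++ P to head of the rest
      intro x hx y hy
      rw [List.getLast?_append, hPlast, option_some_or, Option.mem_some_iff] at hx
      subst hx
      rw [List.head?_append, hB2head, option_some_or, Option.mem_some_iff] at hy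
      subst hy
      rw [e1]
      exact hx2.symm
  -- wrap-around adjacency
  have hLne : L ≠ [] := by rw [hL]; simp
  have hLhead : L.head? = some (f 0) := by
    rw [hL]
    simp only [List.head?_append]
    simp
  have hwrap : ∀ z ∈ L.getLast?, G.Adj z (f 0) := by
    intro z hz
    rw [hL] at hz
    simp only [List.getLast?_append] at hz
    rcases Nat.eq_zero_or_pos k with h4z | h4p
    · rw [hN4, h4z] at hz
      simp only [List.range_zero, List.map_nil, List.getLast?_nil, Option.none_or] at hz
      rcases Nat.eq_zero_or_pos (n - 1 - t) with h3z | h3p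
      · rw [hN3, h3z] at hz
        simp only [List.range_zero, List.map_nil, List.getLast?_nil, Option.none_or] at hz
        rw [hB2last] at hz
        simp only [option_some_or, Option.mem_some_iff] at hz
        subst hz
        have hk1 : f (k + 1) = f 1 := by rw [h4z]
        rw [hk1]
        exact jf
      · obtain ⟨l3, hl3⟩ : ∃ l, n - 1 - t = l + 1 := ⟨n - 1 - t - 1, by omega⟩
        rw [hN3, List.map_map, hl3, getLast?_map_range] at hz
        simp only [option_some_or, Option.mem_some_iff] at hz
        subst hz
        have hz' : (f ∘ fun m => t + 1 + m) l3 = f (n - 1) := by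
          simp only [Function.comp]; congr 1; omega
        rw [hz']
        exact jg
    · obtain ⟨l4, hl4⟩ : ∃ l, k = l + 1 := ⟨k - 1, by omega⟩
      rw [hN4, List.map_map, hl4, getLast?_map_range] at hz
      simp only [option_some_or, Option.mem_some_iff] at hz
      subst hz
      have hz' : (f ∘ fun m => l4 + 1 - m) l4 = f 1 := by
        simp only [Function.comp]; congr 1; omega
      rw [hz']
      exact jf
  -- conclude
  have h3L : 3 ≤ L.length := by omega
  have hLh : L.head hLne = f 0 := by
    have h2' := List.head?_eq_head (l := L) hLne
    rw [h2'] at hLhead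
    exact (Option.some_inj.mp hLhead).symm
  have hwr : G.Adj (L.getLast hLne) (L.head hLne) := by
    rw [hLh]
    exact hwrap _ (Option.mem_def.mpr (List.getLast?_eq_getLast hLne))
  have hle := length_le_of_cycle_list G n c ⟨⟨hn3, hcinj, hadj⟩, hmax⟩ L h3L hndL hchL hLne hwr
  omega
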